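/- For any multiplicities 1 ≤ n_1 ≤ n_2, the new depth of [n_1, n_2] equals n_2. -/

import Mathlib

/-- The poset `[n₁,…,n_k]`: nonzero vectors `x : Fin k → ℕ` with `x i ≤ n i` for all `i`,
ordered componentwise. -/
def ground {k : ℕ} (n : Fin k → ℕ) : Set (Fin k → ℕ) :=
  {x | x ≠ 0 ∧ ∀ i, x i ≤ n i}

/-- The depth of an element: the sum of its coordinates. -/
def depthv {k : ℕ} (x : Fin k → ℕ) : ℕ := ∑ i, x i

/-- An interval partition of the poset `[n₁,…,n_k]`: a collection of pairs `(X,Y)` with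
`X ≤ Y`, both in the poset, whose intervals `[X,Y] = Set.Icc X Y` are pairwise disjoint
and cover the poset. (Since `X` is nonzero and `Y` is bounded by `n`, each such interval
is a nonempty subset of the poset.) -/
structure IntervalPartition (k : ℕ) (n : Fin k → ℕ) where
  pairs : Set ((Fin k → ℕ) × (Fin k → ℕ))
  bot_mem : ∀ p ∈ pairs, p.1 ∈ ground n
  top_mem : ∀ p ∈ pairs, p.2 ∈ ground n
  bot_le_top : ∀ p ∈ pairs, p.1 ≤ p.2
  covers : ∀ x ∈ ground n, ∃ p ∈ pairs, x ∈ Set.Icc p.1 p.2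
  pairwise_disjoint : ∀ p ∈ pairs, ∀ q ∈ pairs, p ≠ q →
    Disjoint (Set.Icc p.1 p.2) (Set.Icc q.1 q.2)

/-- The new depth of an interval partition: the minimum over its intervals `[X,Y]`
of `depth Y`. -/
noncomputable def ndepthP {k : ℕ} {n : Fin k → ℕ} (P : IntervalPartition k n) : ℕ :=
  sInf ((fun p => depthv p.2) '' P.pairs)

/-- The new depth of the poset `[n₁,…,n_k]`: the maximum of `ndepthP P` over all
interval partitions `P`. -/
noncomputable def ndepth {k : ℕ} (n : Fin k → ℕ) : ℕ :=
  sSup (Set.range (fun P : IntervalPartition k n => ndepthP P))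

/-- For a 0-1 vector `u` (as a Boolean vector), `sVec n u` has `i`-th coordinate `n i`
if `u i = true` and `0` otherwise. -/
def sVec {k : ℕ} (n : Fin k → ℕ) (u : Fin k → Bool) : Fin k → ℕ :=
  fun i => if u i then n i else 0

lemma depthv_two (x : Fin 2 → ℕ) : depthv x = x 0 + x 1 := by
  simp [depthv, Fin.sum_univ_two]

lemma ndepthP_le (n₁ n₂ : ℕ) (h₁ : 1 ≤ n₁) (h₁₂ : n₁ ≤ n₂)
    (P : IntervalPartition 2 ![n₁, n₂]) : ndepthP P ≤ n₂ := by
  have h₂ : 1 ≤ n₂ := h₁.trans h₁₂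
  have he1 : (![1,0] : Fin 2 → ℕ) ∈ ground ![n₁,n₂] := by
    constructor
    · intro h; have := congrFun h 0; simp at this
    · intro i; fin_cases i <;> simp [h₁]
  have he2 : (![0,1] : Fin 2 → ℕ) ∈ ground ![n₁,n₂] := by
    constructor
    · intro h; have := congrFun h 1; simp at this
    · intro i; fin_cases i <;> simp [h₂]
  obtain ⟨p, hp, hpl, hpr⟩ := P.covers _ he1
  obtain ⟨q, hq, hql, hqr⟩ := P.covers _ he2
  have hpl0 := hpl 0; have hpl1 := hpl 1
  have hpr0 := hpr 0; have hpr1 := hpr 1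
  have hql0 := hql 0; have hql1 := hql 1
  have hqr0 := hqr 0; have hqr1 := hqr 1
  simp only [Matrix.cons_val_zero, Matrix.cons_val_one, Matrix.head_cons] at hpl0 hpl1 hpr0 hpr1 hql0 hql1 hqr0 hqr1
  have hne : p ≠ q := by
    rintro rfl
    have h0 := (P.bot_mem p hp).1
    apply h0
    funext i; fin_cases i <;> simp <;> omega
  by_cases hc : p.2 1 = 0
  · have hb := (P.top_mem p hp).2 0
    simp only [Matrix.cons_val_zero] at hb
    have : ndepthP P ≤ depthv p.2 := Nat.sInf_le ⟨p, hp, rfl⟩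
    rw [depthv_two] at this
    omega
  · by_cases hc' : q.2 0 = 0
    · have hb := (P.top_mem q hq).2 1
      simp only [Matrix.cons_val_one, Matrix.head_cons, Matrix.cons_val_zero] at hb
      have : ndepthP P ≤ depthv q.2 := Nat.sInf_le ⟨q, hq, rfl⟩
      rw [depthv_two] at this
      omega
    · exfalso
      have hd := P.pairwise_disjoint p hp q hq hne
      have hz1 : (![1,1] : Fin 2 → ℕ) ∈ Set.Icc p.1 p.2 := by
        constructor <;> intro i <;> fin_cases i <;> simp <;> omega
      have hz2 : (![1,1] : Fin 2 → ℕ) ∈ Set.Icc q.1 q.2 := by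
        constructor <;> intro i <;> fin_cases i <;> simp <;> omega
      exact Set.disjoint_left.mp hd hz1 hz2

lemma exists_good_partition (n₁ n₂ : ℕ) (h₁ : 1 ≤ n₁) (h₁₂ : n₁ ≤ n₂) :
    ∃ P : IntervalPartition 2 ![n₁, n₂], n₂ ≤ ndepthP P := by
  have h₂ : 1 ≤ n₂ := h₁.trans h₁₂
  refine ⟨⟨{p | p = (![0,1], ![0,n₂]) ∨ ∃ a, 1 ≤ a ∧ a ≤ n₁ ∧ p = (![a,0], ![a,n₂])},
    ?_, ?_, ?_, ?_, ?_⟩, ?_⟩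
  · rintro p (rfl | ⟨a, ha1, ha2, rfl⟩)
    · constructor
      · intro h; have := congrFun h 1; simp at this
      · intro i; fin_cases i <;> simp [h₂]
    · constructor
      · intro h; have := congrFun h 0; simp at this; omega
      · intro i; fin_cases i <;> simp <;> omega
  · rintro p (rfl | ⟨a, ha1, ha2, rfl⟩)
    · constructor
      · intro h; have := congrFun h 1; simp at this; omega
      · intro i; fin_cases i <;> simp
    · constructor
      · intro h; have := congrFun h 0; simp at this; omega
      · intro i; fin_cases i <;> simp <;> omega
  · rintro p (rfl | ⟨a, ha1, ha2, rfl⟩) <;> intro i <;> fin_cases i <;> simp <;> omega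
  · rintro x ⟨hx0, hxb⟩
    have hb0 := hxb 0; have hb1 := hxb 1
    simp only [Matrix.cons_val_zero, Matrix.cons_val_one, Matrix.head_cons] at hb0 hb1
    by_cases h : x 0 = 0
    · have hx1 : 1 ≤ x 1 := by
        rcases Nat.eq_zero_or_pos (x 1) with h1 | h1
        · exfalso; apply hx0; funext i; fin_cases i <;> simp [h, h1]
        · exact h1
      exact ⟨(![0,1], ![0,n₂]), Or.inl rfl,
        by intro i; fin_cases i <;> simp <;> omega,
        by intro i; fin_cases i <;> simp <;> omega⟩
    · exact ⟨(![x 0, 0], ![x 0, n₂]), Or.inr ⟨x 0, by omega, hb0, rfl⟩,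
        by intro i; fin_cases i <;> simp,
        by intro i; fin_cases i <;> simp <;> omega⟩
  · rintro p (rfl | ⟨a, ha1, ha2, rfl⟩) q (rfl | ⟨b, hb1, hb2, rfl⟩) hne <;>
      rw [Set.disjoint_left] <;> rintro z ⟨hz1l, hz1r⟩ ⟨hz2l, hz2r⟩
    · exact hne rfl
    · have g1 := hz1r 0; have g2 := hz2l 0
      simp only [Matrix.cons_val_zero] at g1 g2
      omega
    · have g1 := hz1l 0; have g2 := hz2r 0
      simp only [Matrix.cons_val_zero] at g1 g2
      omega
    · have g1 := hz1l 0; have g2 := hz1r 0; have g3 := hz2l 0; have g4 := hz2r 0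
      simp only [Matrix.cons_val_zero] at g1 g2 g3 g4
      have hab : a = b := by omega
      exact hne (by rw [hab])
  · refine le_csInf ⟨depthv (![0,n₂] : Fin 2 → ℕ), ⟨(![0,1], ![0,n₂]), Or.inl rfl, rfl⟩⟩ ?_
    rintro y ⟨p, (rfl | ⟨a, ha1, ha2, rfl⟩), rfl⟩ <;> simp [depthv_two]

/-- for `1 ≤ n₁ ≤ n₂`, the new depth of `[n₁, n₂]` is `n₂`. -/
theorem stmt8 (n₁ n₂ : ℕ) (h₁ : 1 ≤ n₁) (h₁₂ : n₁ ≤ n₂) :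
    ndepth ![n₁, n₂] = n₂ := by
  obtain ⟨P₀, hP₀⟩ := exists_good_partition n₁ n₂ h₁ h₁₂
  have hub : ∀ P : IntervalPartition 2 ![n₁, n₂], ndepthP P ≤ n₂ := ndepthP_le n₁ n₂ h₁ h₁₂
  have hbdd : BddAbove (Set.range (fun P : IntervalPartition 2 ![n₁, n₂] => ndepthP P)) :=
    ⟨n₂, by rintro y ⟨P, rfl⟩; exact hub P⟩
  apply le_antisymm
  · exact csSup_le ⟨_, ⟨P₀, rfl⟩⟩ (by rintro y ⟨P, rfl⟩; exact hub P)
  · exact hP₀.trans (le_csSup hbdd ⟨P₀, rfl⟩)
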